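/- Let p be an odd prime, χ a primitive Dirichlet character with values in ℂ_p whose conductor F is odd and divisible by p, and n a positive integer. Let ψ be the primitive Dirichlet character (with values in ℂ_p) associated to the product of χ with ω^{-n}, and let f' be its conductor. Then l_p(-n, χ) := Σ_{a=1, gcd(a,p)=1}^{F} χ(a)(-1)^a ⟨a⟩^{n} Σ_{j=0}^{n} C(n,j)(F/a)^j E_j equals (1 − ψ(p) p^n) · E_{n,ψ}, where E_{n,ψ} = (f')^n Σ_{b=0}^{f'-1} ψ(b)(-1)^b E_n(b/f'). -/

import Mathlib

/-- The Euler numbers `E₀ = 1`, `∑_{k=0}^{n} C(n,k) Eₖ + Eₙ = 0` for `n ≥ 1`. -/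
noncomputable def eulerNumber : ℕ → ℚ
  | 0 => 1
  | n + 1 => (-1/2) * ∑ k ∈ (Finset.range (n+1)).attach,
      ((n+1).choose k.1 : ℚ) * eulerNumber k.1
  decreasing_by exact Finset.mem_range.mp k.2

/-- The Euler polynomials `Eₙ(x) = ∑_{k=0}^n C(n,k) Eₖ x^{n-k}`. -/
noncomputable def eulerPoly (n : ℕ) (x : ℚ) : ℚ :=
  ∑ k ∈ Finset.range (n+1), (n.choose k : ℚ) * eulerNumber k * x ^ (n - k)

open Polynomial Finset

noncomputable def EP (n : ℕ) : ℚ[X] :=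
  ∑ k ∈ range (n+1), C ((n.choose k : ℚ) * eulerNumber k) * X ^ (n - k)

lemma EP_eval (n : ℕ) (x : ℚ) : (EP n).eval x = eulerPoly n x := by
  simp [EP, eulerPoly, eval_finset_sum]

lemma euler_rec (t : ℕ) :
    ∑ k ∈ range (t+2), ((t+1).choose k : ℚ) * eulerNumber k = - eulerNumber (t+1) := by
  have hdef : eulerNumber (t+1) = (-1/2) * ∑ k ∈ range (t+1),
      ((t+1).choose k : ℚ) * eulerNumber k := by
    rw [eulerNumber]
    congr 1
    exact Finset.sum_attach (range (t+1)) (fun k => ((t+1).choose k : ℚ) * eulerNumber k)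
  rw [Finset.sum_range_succ]
  have h2 : ∑ k ∈ range (t+1), ((t+1).choose k : ℚ) * eulerNumber k
      = -2 * eulerNumber (t+1) := by
    rw [hdef]; ring
  rw [h2]
  simp
  ring

lemma EP_eval_zero (n : ℕ) : (EP n).eval 0 = eulerNumber n := by
  rw [EP, eval_finset_sum]
  rw [Finset.sum_eq_single n]
  · simp
  · intro k hk hkn
    have hk' : k < n + 1 := Finset.mem_range.mp hk
    have : 0 < n - k := Nat.sub_pos_of_lt (lt_of_le_of_ne (Nat.lt_succ_iff.mp hk') hkn)
    simp [zero_pow (by omega : n - k ≠ 0)]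
  · intro h; exact absurd (Finset.self_mem_range_succ n) h

lemma EP_eval_one (n : ℕ) : (EP n).eval 1 = ∑ k ∈ range (n+1), (n.choose k : ℚ) * eulerNumber k := by
  simp [EP, eval_finset_sum]

lemma EP_derivative (n : ℕ) : (EP (n+1)).derivative = C ((n:ℚ)+1) * EP n := by
  rw [EP, EP, derivative_sum, Finset.mul_sum]
  rw [Finset.sum_range_succ]
  have hlast : (C (((n+1).choose (n+1) : ℚ) * eulerNumber (n+1)) * X ^ (n+1-(n+1))).derivative = 0 := by
    simp
  rw [hlast, add_zero]
  apply Finset.sum_congr rfl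
  intro k hk
  have hk' : k ≤ n := Nat.lt_succ_iff.mp (Finset.mem_range.mp hk)
  rw [derivative_C_mul, derivative_X_pow]
  have h1 : n + 1 - k - 1 = n - k := by omega
  have h3 : (n.choose k * (n+1) : ℕ) = ((n+1).choose k * (n+1-k) : ℕ) := Nat.choose_mul_succ_eq n k
  have h4 : ((n.choose k : ℚ)) * ((n:ℚ)+1) = ((n+1).choose k : ℚ) * ((n+1-k : ℕ) : ℚ) := by
    exact_mod_cast congrArg (fun m : ℕ => (m : ℚ)) h3
  have hc : ((n + 1 - k : ℕ) : ℚ) * (((n+1).choose k : ℚ) * eulerNumber k)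
      = ((n:ℚ)+1) * ((n.choose k : ℚ) * eulerNumber k) := by
    linear_combination (-eulerNumber k) * h4
  rw [h1]
  calc C (((n+1).choose k : ℚ) * eulerNumber k) * (C (((n+1-k : ℕ)) : ℚ) * X ^ (n-k))
      = C (((n+1-k : ℕ):ℚ) * (((n+1).choose k : ℚ) * eulerNumber k)) * X ^ (n-k) := by
        simp only [C_mul]; ring
    _ = C (((n:ℚ)+1) * ((n.choose k : ℚ) * eulerNumber k)) * X ^ (n-k) := by rw [hc]
    _ = C ((n:ℚ)+1) * (C ((n.choose k : ℚ) * eulerNumber k) * X ^ (n-k)) := by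
        simp only [C_mul]; ring

lemma EP_reflect (n : ℕ) : (EP n).comp (X + 1) + EP n = 2 * X ^ n := by
  induction n with
  | zero =>
    simp [EP, eulerNumber]
    norm_num
  | succ n ih =>
    set D : ℚ[X] := (EP (n+1)).comp (X + 1) + EP (n+1) - 2 * X ^ (n+1) with hD
    have hder : D.derivative = 0 := by
      rw [hD]
      simp only [derivative_sub, derivative_add, derivative_comp, EP_derivative,
        derivative_mul, derivative_X_pow, derivative_add, derivative_X, derivative_one]
      simp only [derivative_ofNat, zero_mul, add_zero, zero_add, mul_one]
      have : (C ((n:ℚ)+1) * EP n).comp (X + 1) = C ((n:ℚ)+1) * (EP n).comp (X+1) := by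
        simp [mul_comp]
      rw [this, one_mul, ← mul_add, ih, Nat.add_sub_cancel]
      push_cast
      ring
    have hdeg : D.natDegree = 0 := natDegree_eq_zero_of_derivative_eq_zero hder
    have hDC : D = C (D.coeff 0) := (Polynomial.eq_C_of_natDegree_eq_zero hdeg)
    have hval : D.coeff 0 = 0 := by
      rw [coeff_zero_eq_eval_zero, hD]
      simp only [eval_sub, eval_add, eval_comp, eval_one, eval_X, eval_mul, eval_pow]
      rw [zero_add, EP_eval_one, EP_eval_zero]
      rw [euler_rec n]
      simp
    have : D = 0 := by rw [hDC, hval, map_zero]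
    exact sub_eq_zero.mp this

lemma telescope (r : ℕ) (hr : Odd r) (f : ℕ → ℚ[X]) :
    (∑ i ∈ range r, C ((-1:ℚ)^i) * f (i+1)) + ∑ i ∈ range r, C ((-1:ℚ)^i) * f i
      = f 0 + f r := by
  have key : ∑ i ∈ range (r+1), C ((-1:ℚ)^i) * f i
      = (∑ i ∈ range r, C ((-1:ℚ)^(i+1)) * f (i+1)) + C ((-1:ℚ)^0) * f 0 :=
    Finset.sum_range_succ' _ r
  have key2 : ∑ i ∈ range (r+1), C ((-1:ℚ)^i) * f i
      = (∑ i ∈ range r, C ((-1:ℚ)^i) * f i) + C ((-1:ℚ)^r) * f r :=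
    Finset.sum_range_succ _ r
  have hstep : ∑ i ∈ range r, C ((-1:ℚ)^(i+1)) * f (i+1)
      = -∑ i ∈ range r, C ((-1:ℚ)^i) * f (i+1) := by
    rw [← Finset.sum_neg_distrib]
    apply Finset.sum_congr rfl
    intro i _
    rw [pow_succ]
    simp only [map_mul, map_neg, map_one]
    ring
  have ho : ((-1:ℚ))^r = -1 := hr.neg_one_pow
  rw [hstep] at key
  rw [ho] at key2
  simp only [pow_zero, map_one, one_mul, map_neg] at key key2
  linear_combination key - key2

lemma EP_mul (n r : ℕ) (hr : Odd r) :
    EP n = C ((r:ℚ)^n) * ∑ i ∈ range r, C ((-1:ℚ)^i) *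
      (EP n).comp (C ((r:ℚ))⁻¹ * (X + C (i:ℚ))) := by
  have hr0 : (r:ℚ) ≠ 0 := by
    have := hr.pos
    positivity
  set f : ℕ → ℚ[X] := fun i => (EP n).comp (C ((r:ℚ))⁻¹ * (X + C (i:ℚ))) with hf
  set G : ℚ[X] := C ((r:ℚ)^n) * ∑ i ∈ range r, C ((-1:ℚ)^i) * f i with hG
  have hcomp : ∀ i : ℕ, (f i).comp (X + 1) = f (i+1) := by
    intro i
    rw [hf]
    simp only
    rw [comp_assoc]
    congr 1
    simp only [mul_comp, C_comp, add_comp, X_comp, one_comp, Nat.cast_add, Nat.cast_one,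
      C_add, C_1]
    ring
  have hf0 : f 0 = (EP n).comp (C ((r:ℚ))⁻¹ * X) := by
    rw [hf]; simp
  have hfr : f r = (EP n).comp (C ((r:ℚ))⁻¹ * X + 1) := by
    have he : C ((r:ℚ))⁻¹ * (X + C ((r:ℕ):ℚ)) = C ((r:ℚ))⁻¹ * X + 1 := by
      rw [mul_add, ← C_mul, inv_mul_cancel₀ hr0]
      simp
    calc f r = (EP n).comp (C ((r:ℚ))⁻¹ * (X + C ((r:ℕ):ℚ))) := rfl
      _ = (EP n).comp (C ((r:ℚ))⁻¹ * X + 1) := by rw [he]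
  have hGG : G.comp (X + 1) + G = 2 * X ^ n := by
    have h1 : G.comp (X + 1) = C ((r:ℚ)^n) * ∑ i ∈ range r, C ((-1:ℚ)^i) * f (i+1) := by
      rw [hG, mul_comp, C_comp, Polynomial.sum_comp]
      congr 1
      apply Finset.sum_congr rfl
      intro i _
      rw [mul_comp, C_comp, hcomp]
    rw [h1, hG, ← mul_add, telescope r hr f, hf0, hfr]
    have h2 : (EP n).comp (C ((r:ℚ))⁻¹ * X) + (EP n).comp (C ((r:ℚ))⁻¹ * X + 1)
        = ((EP n).comp (X + 1) + EP n).comp (C ((r:ℚ))⁻¹ * X) := by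
      rw [add_comp, comp_assoc]
      simp only [add_comp, X_comp, one_comp]
      ring
    rw [h2, EP_reflect]
    simp only [mul_comp, ofNat_comp, pow_comp, X_comp]
    have hu' : C ((r:ℚ) ^ n) * C (((r:ℚ))⁻¹ ^ n) = 1 := by
      rw [← C_mul, ← mul_pow, mul_inv_cancel₀ hr0, one_pow, C_1]
    rw [mul_pow, ← C_pow]
    linear_combination (2 * X ^ n : ℚ[X]) * hu'
  set H : ℚ[X] := G - EP n with hH
  have hHrefl : H.comp (X + 1) = -H := by
    have h3 : (EP n).comp (X+1) = 2 * X ^ n - EP n := by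
      linear_combination EP_reflect n
    rw [hH, sub_comp, h3]
    have h4 : G.comp (X+1) = 2 * X ^ n - G := by linear_combination hGG
    rw [h4]
    ring
  have hper : ∀ y : ℚ, H.eval (y + 2) = H.eval y := by
    intro y
    have h5 : H.comp (X + C 2) = H := by
      have : (X + C (2:ℚ)) = (X + 1).comp (X + 1) := by
        simp only [add_comp, X_comp, one_comp]
        rw [show (C (2:ℚ)) = 2 from map_ofNat C 2]
        ring
      rw [this, ← comp_assoc, hHrefl, neg_comp, hHrefl, neg_neg]
    conv_rhs => rw [← h5]
    rw [eval_comp]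
    simp
  have heven : ∀ k : ℕ, H.eval (2 * (k:ℚ)) = H.eval 0 := by
    intro k
    induction k with
    | zero => norm_num
    | succ k ih =>
      push_cast
      have h7 : (2:ℚ) * ((k:ℚ) + 1) = 2 * (k:ℚ) + 2 := by ring
      rw [h7, hper, ih]
  have hHC : H = C (H.eval 0) := by
    have hinf : {x : ℚ | (H - C (H.eval 0)).IsRoot x}.Infinite := by
      apply Set.infinite_of_injective_forall_mem
        (f := fun k : ℕ => (2 * k : ℚ))
      · intro a b hab
        simpa using hab
      · intro k
        simp only [Set.mem_setOf_eq, IsRoot, eval_sub, eval_C]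
        rw [heven k]
        ring
    have := eq_zero_of_infinite_isRoot _ hinf
    linear_combination this
  have hc0 : H.eval 0 = 0 := by
    have := hHrefl
    rw [hHC] at this
    simp only [C_comp, ← map_neg] at this
    have := (C_injective : Function.Injective (C : ℚ → ℚ[X])) this
    linarith
  have : H = 0 := by rw [hHC, hc0, map_zero]
  rw [hH] at this
  linear_combination -this

lemma eulerPoly_mul (n r : ℕ) (hr : Odd r) (x : ℚ) :
    eulerPoly n x = (r:ℚ)^n * ∑ i ∈ range r, (-1:ℚ)^i * eulerPoly n ((x + i)/(r:ℚ)) := by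
  have h := congrArg (eval x) (EP_mul n r hr)
  rw [EP_eval] at h
  rw [h, eval_mul, eval_C, eval_finset_sum]
  congr 1
  apply Finset.sum_congr rfl
  intro i _
  rw [eval_mul, eval_C, eval_comp, eval_mul, eval_C, eval_add, eval_X, eval_C, EP_eval]
  rw [div_eq_inv_mul]

lemma teich_unique (p : ℕ) [hpp : Fact p.Prime] (a : ℕ) (ha : ¬ (p ∣ a)) (x y : ℤ_[p])
    (hx1 : x ^ (p-1) = 1) (hx2 : ‖x - (a:ℤ_[p])‖ < 1)
    (hy1 : y ^ (p-1) = 1) (hy2 : ‖y - (a:ℤ_[p])‖ < 1) : x = y := by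
  have hxy : (∑ i ∈ Finset.range (p-1), x ^ i * y ^ (p - 1 - 1 - i)) * (x - y) = 0 := by
    rw [geom_sum₂_mul, hx1, hy1, sub_self]
  have hmapx : PadicInt.toZMod x = ((a : ℕ) : ZMod p) := by
    have hdx : (p:ℤ_[p]) ∣ (x - (a:ℤ_[p])) := (PadicInt.norm_lt_one_iff_dvd _).mp hx2
    have h0 : PadicInt.toZMod (x - (a:ℤ_[p])) = 0 := by
      rw [← RingHom.mem_ker, PadicInt.ker_toZMod, PadicInt.maximalIdeal_eq_span_p,
        Ideal.mem_span_singleton]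
      exact hdx
    rw [map_sub, map_natCast, sub_eq_zero] at h0
    exact h0
  have hmapy : PadicInt.toZMod y = ((a : ℕ) : ZMod p) := by
    have hdy : (p:ℤ_[p]) ∣ (y - (a:ℤ_[p])) := (PadicInt.norm_lt_one_iff_dvd _).mp hy2
    have h0 : PadicInt.toZMod (y - (a:ℤ_[p])) = 0 := by
      rw [← RingHom.mem_ker, PadicInt.ker_toZMod, PadicInt.maximalIdeal_eq_span_p,
        Ideal.mem_span_singleton]
      exact hdy
    rw [map_sub, map_natCast, sub_eq_zero] at h0
    exact h0
  rcases mul_eq_zero.mp hxy with h | h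
  · exfalso
    have hz : PadicInt.toZMod (∑ i ∈ Finset.range (p-1), x ^ i * y ^ (p - 1 - 1 - i))
        = ((p - 1 : ℕ)) * ((a : ZMod p)) ^ (p - 2) := by
      rw [map_sum]
      have : ∀ i ∈ Finset.range (p-1),
          PadicInt.toZMod (x ^ i * y ^ (p - 1 - 1 - i)) = ((a : ZMod p)) ^ (p - 2) := by
        intro i hi
        have hi' : i < p - 1 := Finset.mem_range.mp hi
        rw [map_mul, map_pow, map_pow, hmapx, hmapy, ← pow_add]
        congr 1
        omega
      rw [Finset.sum_congr rfl this, Finset.sum_const, Finset.card_range, nsmul_eq_mul]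
    have h1 : ((p - 1 : ℕ) : ZMod p) = -1 := by
      have hp1 : 1 ≤ p := hpp.out.one_lt.le
      rw [Nat.cast_sub hp1, ZMod.natCast_self, Nat.cast_one, zero_sub]
    have h2 : ((a : ZMod p)) ≠ 0 := by
      rw [Ne, ZMod.natCast_eq_zero_iff]
      exact ha
    rw [h, map_zero, h1, neg_one_mul, eq_comm, neg_eq_zero] at hz
    exact pow_ne_zero (p-2) h2 hz
  · exact sub_eq_zero.mp h

lemma dist_rel {K : Type*} [Field K] [CharZero K] {f' : ℕ} (ψ : DirichletCharacter K f') (n : ℕ)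
    (m : ℕ) (hd : f' ∣ m) (hmodd : Odd m) :
    (m : K)^n * ∑ a ∈ Finset.range m,
        ψ (a : ZMod f') * (-1:K)^a * ((eulerPoly n ((a:ℚ)/(m:ℚ)) : ℚ) : K)
    = (f' : K)^n * ∑ b ∈ Finset.range f',
        ψ (b : ZMod f') * (-1:K)^b * ((eulerPoly n ((b:ℚ)/(f':ℚ)) : ℚ) : K) := by
  have hm0 : m ≠ 0 := by rintro rfl; simp at hmodd
  have hf'0 : f' ≠ 0 := by rintro rfl; rw [zero_dvd_iff] at hd; exact hm0 hd
  have hmr : m = f' * (m / f') := (Nat.mul_div_cancel' hd).symm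
  set r : ℕ := m / f' with hrdef
  have hodd2 : Odd f' ∧ Odd r := Nat.odd_mul.mp (hmr ▸ hmodd)
  have hf'odd : Odd f' := hodd2.1
  have hrodd : Odd r := hodd2.2
  have hr0 : r ≠ 0 := by
    rintro h
    rw [h, mul_zero] at hmr
    exact hm0 hmr
  have hreindex : ∑ a ∈ Finset.range m,
      ψ (a : ZMod f') * (-1:K)^a * ((eulerPoly n ((a:ℚ)/(m:ℚ)) : ℚ) : K)
      = ∑ z ∈ (Finset.range f') ×ˢ (Finset.range r),
        ψ ((z.1 + f' * z.2 : ℕ) : ZMod f') * (-1:K)^(z.1 + f' * z.2) *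
          ((eulerPoly n (((z.1 + f' * z.2 : ℕ):ℚ)/(m:ℚ)) : ℚ) : K) := by
    apply Finset.sum_nbij' (i := fun a => (a % f', a / f')) (j := fun z => z.1 + f' * z.2)
    · intro a ha
      rw [Finset.mem_range] at ha
      rw [Finset.mem_product, Finset.mem_range, Finset.mem_range]
      constructor
      · exact Nat.mod_lt a (Nat.pos_of_ne_zero hf'0)
      · rw [hrdef, Nat.div_lt_iff_lt_mul (Nat.pos_of_ne_zero hf'0)]
        have h9 : m = (m / f') * f' := (Nat.div_mul_cancel hd).symm
        omega
    · intro z hz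
      rw [Finset.mem_product, Finset.mem_range, Finset.mem_range] at hz
      rw [Finset.mem_range]
      have hz2 : f' * z.2 + f' ≤ f' * r := by
        have h8 : z.2 + 1 ≤ r := hz.2
        calc f' * z.2 + f' = f' * (z.2 + 1) := by ring
          _ ≤ f' * r := Nat.mul_le_mul_left _ h8
      omega
    · intro a ha
      exact Nat.mod_add_div a f'
    · intro z hz
      rw [Finset.mem_product, Finset.mem_range, Finset.mem_range] at hz
      have h1 : (z.1 + f' * z.2) % f' = z.1 := by
        rw [Nat.add_mul_mod_self_left, Nat.mod_eq_of_lt hz.1]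
      have h2 : (z.1 + f' * z.2) / f' = z.2 := by
        rw [Nat.add_mul_div_left _ _ (Nat.pos_of_ne_zero hf'0),
          Nat.div_eq_of_lt hz.1, zero_add]
      exact Prod.ext h1 h2
    · intro a ha
      rw [Nat.mod_add_div a f']
  rw [hreindex, Finset.sum_product]
  rw [Finset.mul_sum, Finset.mul_sum]
  apply Finset.sum_congr rfl
  intro b hb
  rw [Finset.mem_range] at hb
  -- simplify the inner sum over i
  have hterm : ∀ i ∈ Finset.range r,
      ψ ((b + f' * i : ℕ) : ZMod f') * (-1:K)^(b + f' * i) *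
        ((eulerPoly n (((b + f' * i : ℕ):ℚ)/(m:ℚ)) : ℚ) : K)
      = ψ ((b : ℕ) : ZMod f') * (-1:K)^b *
          ((((-1:ℚ))^i * eulerPoly n ((((b:ℚ)/(f':ℚ)) + (i:ℚ))/(r:ℚ)) : ℚ) : K) := by
    intro i hi
    have hψeq : ((b + f' * i : ℕ) : ZMod f') = ((b : ℕ) : ZMod f') := by
      push_cast
      simp [ZMod.natCast_self]
    have hsign : (-1:K)^(b + f' * i) = (-1:K)^b * ((-1:K))^i := by
      rw [pow_add, pow_mul, hf'odd.neg_one_pow]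
    have harg : (((b + f' * i : ℕ):ℚ)/(m:ℚ)) = (((b:ℚ)/(f':ℚ)) + (i:ℚ))/(r:ℚ) := by
      have hf'Q : ((f':ℚ)) ≠ 0 := Nat.cast_ne_zero.mpr hf'0
      have hrQ : ((r:ℚ)) ≠ 0 := Nat.cast_ne_zero.mpr hr0
      have hmQ : (m:ℚ) = (f':ℚ) * (r:ℚ) := by rw [hmr]; push_cast; ring
      rw [hmQ]
      push_cast
      field_simp
    rw [hψeq, hsign, harg]
    push_cast
    ring
  rw [Finset.sum_congr rfl hterm]
  -- now pull out constants and use eulerPoly_mul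
  have hconst : ∑ i ∈ Finset.range r,
      ψ ((b : ℕ) : ZMod f') * (-1:K)^b *
        ((((-1:ℚ))^i * eulerPoly n ((((b:ℚ)/(f':ℚ)) + (i:ℚ))/(r:ℚ)) : ℚ) : K)
      = ψ ((b : ℕ) : ZMod f') * (-1:K)^b *
        (((∑ i ∈ Finset.range r, ((-1:ℚ))^i * eulerPoly n ((((b:ℚ)/(f':ℚ)) + (i:ℚ))/(r:ℚ))) : ℚ) : K) := by
    rw [← Finset.mul_sum, Rat.cast_sum]
  rw [hconst]
  have hkey : ((m:ℚ))^n * ∑ i ∈ Finset.range r, ((-1:ℚ))^i *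
      eulerPoly n ((((b:ℚ)/(f':ℚ)) + (i:ℚ))/(r:ℚ)) = ((f':ℚ))^n * eulerPoly n ((b:ℚ)/(f':ℚ)) := by
    have := eulerPoly_mul n r hrodd ((b:ℚ)/(f':ℚ))
    have hmQ : (m:ℚ) = (f':ℚ) * (r:ℚ) := by rw [hmr]; push_cast; ring
    rw [hmQ, mul_pow, mul_assoc, ← this]
  have hcastm : ((m:K))^n = ((((m:ℚ))^n : ℚ) : K) := by push_cast; ring
  have hcastf : ((f':K))^n = ((((f':ℚ))^n : ℚ) : K) := by push_cast; ring
  rw [hcastm, hcastf]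
  calc ((((m:ℚ))^n : ℚ) : K) * (ψ ((b : ℕ) : ZMod f') * (-1:K)^b *
        (((∑ i ∈ Finset.range r, ((-1:ℚ))^i * eulerPoly n ((((b:ℚ)/(f':ℚ)) + (i:ℚ))/(r:ℚ))) : ℚ) : K))
      = ψ ((b : ℕ) : ZMod f') * (-1:K)^b *
        ((((m:ℚ))^n * ∑ i ∈ Finset.range r, ((-1:ℚ))^i * eulerPoly n ((((b:ℚ)/(f':ℚ)) + (i:ℚ))/(r:ℚ)) : ℚ) : K) := by
        push_cast
        ring
    _ = ψ ((b : ℕ) : ZMod f') * (-1:K)^b * ((((f':ℚ))^n * eulerPoly n ((b:ℚ)/(f':ℚ)) : ℚ) : K) := by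
        rw [hkey]
    _ = ((((f':ℚ))^n : ℚ) : K) * (ψ ((b : ℕ) : ZMod f') * (-1:K)^b * ((eulerPoly n ((b:ℚ)/(f':ℚ)) : ℚ) : K)) := by
        push_cast
        ring

lemma psub {K : Type*} [Field K] [CharZero K] {f' : ℕ} (ψ : DirichletCharacter K f') (n : ℕ)
    (p m : ℕ) (hp : Odd p) (hp0 : p ≠ 0) :
    ∑ a ∈ Finset.range (p*m), (if p ∣ a then
        ψ (a : ZMod f') * (-1:K)^a * ((eulerPoly n ((a:ℚ)/((p*m : ℕ):ℚ)) : ℚ) : K) else 0)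
    = ψ ((p : ℕ) : ZMod f') * ∑ c ∈ Finset.range m,
        ψ (c : ZMod f') * (-1:K)^c * ((eulerPoly n ((c:ℚ)/(m:ℚ)) : ℚ) : K) := by
  by_cases hm0 : m = 0
  · subst hm0
    simp
  rw [← Finset.sum_filter]
  have himg : (Finset.range (p*m)).filter (fun a => p ∣ a)
      = (Finset.range m).image (fun c => p * c) := by
    ext a
    simp only [Finset.mem_filter, Finset.mem_range, Finset.mem_image]
    constructor
    · rintro ⟨hlt, c, rfl⟩
      refine ⟨c, ?_, rfl⟩
      exact lt_of_mul_lt_mul_left hlt (Nat.zero_le p)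
    · rintro ⟨c, hc, rfl⟩
      exact ⟨Nat.mul_lt_mul_left (Nat.pos_of_ne_zero hp0) |>.mpr hc, c, rfl⟩
  rw [himg, Finset.sum_image (by
    intro x hx y hy hxy
    exact Nat.eq_of_mul_eq_mul_left (Nat.pos_of_ne_zero hp0) hxy)]
  rw [Finset.mul_sum]
  apply Finset.sum_congr rfl
  intro c hc
  have hψ : ψ ((p * c : ℕ) : ZMod f') = ψ ((p : ℕ) : ZMod f') * ψ ((c : ℕ) : ZMod f') := by
    push_cast [map_mul]
    rfl
  have hsign : (-1:K)^(p*c) = (-1:K)^c := by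
    rw [pow_mul, hp.neg_one_pow]
  have harg : (((p*c : ℕ)):ℚ)/(((p*m : ℕ)):ℚ) = (c:ℚ)/(m:ℚ) := by
    push_cast
    rw [mul_div_mul_left]
    exact Nat.cast_ne_zero.mpr hp0
  rw [hψ, hsign, harg]
  ring

lemma dist_aux_cond (p : ℕ) (hp' : p.Prime) [Fact p.Prime]
    (K : Type*) [Field K] [Algebra ℚ_[p] K]
    (F : ℕ) (hF0 : F ≠ 0)
    (χ : DirichletCharacter K F) (hχ : χ.IsPrimitive)
    (n : ℕ) (ω : ℕ → ℤ_[p])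
    (hω : ∀ a : ℕ, a.Coprime p → (ω a) ^ (p - 1) = 1 ∧ ‖ω a - (a : ℤ_[p])‖ < 1)
    (f' : ℕ) (hf'F : f' ∣ F) (ψ : DirichletCharacter K f')
    (hψ : ∀ a : ℕ, a.Coprime F →
      ψ (a : ZMod f') * (algebraMap ℚ_[p] K ((ω a : ℚ_[p]))) ^ n = χ (a : ZMod F))
    (d : ℕ) (hdF : d ∣ F) (hpd : p ∣ d) (hf'd : f' ∣ d) (hdfp : d ∣ f' * p) :
    F ∣ f' * p := by
  haveI : NeZero F := ⟨hF0⟩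
  have hpF : p ∣ F := hpd.trans hdF
  have hker : (ZMod.unitsMap hdF).ker ≤ χ.toUnitHom.ker := by
    intro u hu
    rw [MonoidHom.mem_ker] at hu ⊢
    set a : ℕ := ((u : ZMod F)).val with ha
    have hau : ((a : ℕ) : ZMod F) = (u : ZMod F) := by
      rw [ha, ZMod.natCast_val, ZMod.cast_id]
    have hacop : a.Coprime F := ZMod.val_coe_unit_coprime u
    have hud : (ZMod.castHom hdF (ZMod d)) ((u : ZMod F)) = 1 := by
      have h2 : ((ZMod.unitsMap hdF u : ZMod d)) = ((1 : (ZMod d)ˣ) : ZMod d) := by rw [hu]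
      rw [ZMod.unitsMap_def, Units.coe_map] at h2
      simpa using h2
    have had : ((a : ℕ) : ZMod d) = 1 := by
      calc ((a:ℕ) : ZMod d) = (ZMod.castHom hdF (ZMod d)) ((a:ℕ) : ZMod F) :=
            (map_natCast _ a).symm
        _ = 1 := by rw [hau, hud]
    have haf' : ((a : ℕ) : ZMod f') = 1 := by
      calc ((a:ℕ) : ZMod f') = (ZMod.castHom hf'd (ZMod f')) ((a:ℕ) : ZMod d) :=
            (map_natCast _ a).symm
        _ = 1 := by rw [had, map_one]
    have hapz : ((a : ℕ) : ZMod p) = 1 := by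
      calc ((a:ℕ) : ZMod p) = (ZMod.castHom hpd (ZMod p)) ((a:ℕ) : ZMod d) :=
            (map_natCast _ a).symm
        _ = 1 := by rw [had, map_one]
    have hacp : a.Coprime p := Nat.Coprime.coprime_dvd_right hpF hacop
    have hωa : ω a = 1 := by
      obtain ⟨h1, h2⟩ := hω a hacp
      refine teich_unique p a (hp'.coprime_iff_not_dvd.mp hacp.symm) (ω a) 1 h1 h2 (one_pow _) ?_
      rw [PadicInt.norm_lt_one_iff_dvd]
      have hmod : a ≡ 1 [MOD p] := (ZMod.natCast_eq_natCast_iff a 1 p).mp (by simpa using hapz)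
      have hz : (p:ℤ) ∣ (1:ℤ) - (a:ℤ) := Nat.ModEq.dvd hmod
      have hz2 := map_dvd (Int.castRingHom ℤ_[p]) hz
      simpa using hz2
    have hχ1 : χ ((a:ℕ) : ZMod F) = 1 := by
      rw [← hψ a hacop, haf', hωa]
      simp
    ext
    rw [MulChar.coe_toUnitHom, ← hau, hχ1]
    rfl
  have h1 : χ.FactorsThrough d :=
    (DirichletCharacter.factorsThrough_iff_ker_unitsMap hdF).mpr hker
  have h2 : χ.conductor ≤ d := Nat.sInf_le h1
  have h3 : χ.conductor = F := hχ
  have h4 : d ≤ F := Nat.le_of_dvd (Nat.pos_of_ne_zero hF0) hdF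
  have h5 : F = d := le_antisymm (h3 ▸ h2) h4
  exact h5 ▸ hdfp


/-- Interpolation property of the `p`-adic `l`-function at negative integers.
Here `K` plays the role of `ℂ_p` (a field extension of `ℚ_p`), `χ` is a primitive
Dirichlet character of odd conductor `F` divisible by the odd prime `p`,
`ω a ∈ ℤ_p` is the Teichmüller lift of `a` (the unique `(p-1)`-st root of unity
congruent to `a` mod `p`), `⟨a⟩ = a/ω(a)`, and `ψ` is the primitive Dirichlet character
(of conductor `f'`) associated to the product of `χ` with `ω^{-n}`, characterized by
`ψ(a) ω(a)^n = χ(a)` for `a` coprime to `F`.  Then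
`l_p(-n, χ) = ∑_{a=1, (a,p)=1}^{F} χ(a)(-1)^a ⟨a⟩^n ∑_{j=0}^{n} C(n,j)(F/a)^j E_j
  = (1 − ψ(p) pⁿ) E_{n,ψ}`, with `E_{n,ψ} = (f')ⁿ ∑_{b=0}^{f'-1} ψ(b)(-1)^b Eₙ(b/f')`. -/
theorem lp_interpolation (p : ℕ) [Fact p.Prime] (hp : Odd p)
    (K : Type*) [Field K] [Algebra ℚ_[p] K]
    (F : ℕ) (hFodd : Odd F) (hpF : p ∣ F)
    (χ : DirichletCharacter K F) (hχ : χ.IsPrimitive)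
    (n : ℕ) (hn : 0 < n)
    (ω : ℕ → ℤ_[p])
    (hω : ∀ a : ℕ, a.Coprime p → (ω a) ^ (p - 1) = 1 ∧ ‖ω a - (a : ℤ_[p])‖ < 1)
    (f' : ℕ) (hf'F : f' ∣ F) (ψ : DirichletCharacter K f') (hψprim : ψ.IsPrimitive)
    (hψ : ∀ a : ℕ, a.Coprime F →
      ψ (a : ZMod f') * (algebraMap ℚ_[p] K ((ω a : ℚ_[p]))) ^ n = χ (a : ZMod F)) :
    ∑ a ∈ Finset.Icc 1 F,
        (if a.Coprime p then
          χ (a : ZMod F) * (-1 : K) ^ a *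
            algebraMap ℚ_[p] K (((a : ℚ_[p]) / (ω a : ℚ_[p])) ^ n) *
            ∑ j ∈ Finset.range (n + 1),
              (((n.choose j : ℚ) * ((F : ℚ) / (a : ℚ)) ^ j * eulerNumber j : ℚ) : K)
        else 0) =
      (1 - ψ ((p : ℕ) : ZMod f') * (p : K) ^ n) *
        ((f' : K) ^ n *
          ∑ b ∈ Finset.range f',
            ψ (b : ZMod f') * (-1 : K) ^ b * ((eulerPoly n ((b : ℚ) / f') : ℚ) : K)) := by
  haveI : CharZero K := charZero_of_injective_algebraMap (algebraMap ℚ_[p] K).injective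
  have hp' : p.Prime := Fact.out
  have hp0 : p ≠ 0 := hp'.ne_zero
  have hF0 : F ≠ 0 := by
    rintro rfl
    have := Nat.odd_iff.mp hFodd
    omega
  haveI : NeZero F := ⟨hF0⟩
  have hf'0 : f' ≠ 0 := by rintro rfl; rw [zero_dvd_iff] at hf'F; exact hF0 hf'F
  haveI : NeZero f' := ⟨hf'0⟩
  obtain ⟨m, hm⟩ := hpF
  have hpF : p ∣ F := ⟨m, hm⟩
  have hm0 : m ≠ 0 := by rintro rfl; rw [mul_zero] at hm; exact hF0 hm
  have hmodd : Odd m := by rw [hm] at hFodd; exact (Nat.odd_mul.mp hFodd).2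
  -- Conductor argument: F ∣ f' * p
  have hcond : F ∣ f' * p := by
    by_cases hpf : p ∣ f'
    case pos => exact dist_aux_cond p hp' K F hF0 χ hχ n ω hω f' hf'F ψ hψ f' hf'F hpf dvd_rfl (dvd_mul_right f' p)
    case neg =>
      have hcop : Nat.Coprime f' p := Nat.coprime_comm.mp (hp'.coprime_iff_not_dvd.mpr hpf)
      exact dist_aux_cond p hp' K F hF0 χ hχ n ω hω f' hf'F ψ hψ (f' * p)
        (Nat.Coprime.mul_dvd_of_dvd_of_dvd hcop hf'F hpF) (dvd_mul_left p f') (dvd_mul_right f' p) dvd_rfl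
  -- reduce Icc to range
  have hIR : ∀ (G : ℕ → K), G 0 = 0 → G F = 0 →
      ∑ a ∈ Finset.Icc 1 F, G a = ∑ a ∈ Finset.range F, G a := by
    intro G h0 hF
    have h1 : ∑ a ∈ Finset.Icc 1 F, G a = ∑ a ∈ Finset.range (F+1), G a := by
      apply Finset.sum_subset
      · intro x hx
        rw [Finset.mem_Icc] at hx
        rw [Finset.mem_range]
        omega
      · intro x hx hx2
        rw [Finset.mem_range] at hx
        rw [Finset.mem_Icc] at hx2
        have : x = 0 := by omega
        rw [this]
        exact h0
    rw [h1, Finset.sum_range_succ, hF, add_zero]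
  rw [hIR]
  rotate_left
  · rw [if_neg]
    rw [Nat.coprime_zero_left]
    exact hp'.ne_one
  · rw [if_neg]
    intro hc
    have hd1 : p ∣ Nat.gcd F p := Nat.dvd_gcd hpF dvd_rfl
    rw [hc] at hd1
    exact hp'.ne_one (Nat.dvd_one.mp hd1)
  have hterm : ∀ a ∈ Finset.range F,
      (if a.Coprime p then
          χ (a : ZMod F) * (-1 : K) ^ a *
            algebraMap ℚ_[p] K (((a : ℚ_[p]) / (ω a : ℚ_[p])) ^ n) *
            ∑ j ∈ Finset.range (n + 1),
              (((n.choose j : ℚ) * ((F : ℚ) / (a : ℚ)) ^ j * eulerNumber j : ℚ) : K)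
        else 0)
      = (if a.Coprime p then
          (F:K)^n * (ψ (a : ZMod f') * (-1:K)^a * ((eulerPoly n ((a:ℚ)/(F:ℚ)) : ℚ) : K))
        else 0) := by
    intro a _
    by_cases hap : a.Coprime p
    · rw [if_pos hap, if_pos hap]
      by_cases haF : a.Coprime F
      · have ha0 : a ≠ 0 := by
          rintro rfl
          rw [Nat.coprime_zero_left] at hap
          exact hp'.ne_one hap
        obtain ⟨hω1, hω2⟩ := hω a hap
        set W : K := algebraMap ℚ_[p] K ((ω a : ℚ_[p])) with hW
        have hWpow : W^(p-1) = 1 := by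
          rw [hW, ← map_pow]
          have hcoe : ((ω a : ℚ_[p]))^(p-1) = (((ω a)^(p-1) : ℤ_[p]) : ℚ_[p]) := by push_cast; ring
          rw [hcoe, hω1]
          simp
        have hWne : W ≠ 0 := by
          intro h0
          rw [h0, zero_pow (by have := hp'.two_le; omega : p - 1 ≠ 0)] at hWpow
          exact zero_ne_one hWpow
        have hχa : χ ((a:ℕ) : ZMod F) = ψ ((a:ℕ) : ZMod f') * W^n := (hψ a haF).symm
        have hdiv : algebraMap ℚ_[p] K (((a : ℚ_[p]) / (ω a : ℚ_[p]))^n) = ((a:K))^n / W^n := by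
          rw [map_pow, map_div₀, map_natCast, hW, div_pow]
        have hsum : (∑ j ∈ Finset.range (n + 1),
              (((n.choose j : ℚ) * ((F : ℚ) / (a : ℚ)) ^ j * eulerNumber j : ℚ) : K))
            = (((∑ j ∈ Finset.range (n + 1),
                ((n.choose j : ℚ) * ((F : ℚ) / (a : ℚ)) ^ j * eulerNumber j)) : ℚ) : K) := by
          push_cast
          ring
        have hQ : ((a:ℚ))^n * ∑ j ∈ Finset.range (n + 1),
              ((n.choose j : ℚ) * ((F : ℚ) / (a : ℚ)) ^ j * eulerNumber j)
            = ((F:ℚ))^n * eulerPoly n ((a:ℚ)/(F:ℚ)) := by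
          rw [eulerPoly, Finset.mul_sum, Finset.mul_sum]
          apply Finset.sum_congr rfl
          intro j hj
          have hj' : j ≤ n := Nat.lt_succ_iff.mp (Finset.mem_range.mp hj)
          have haQ : (a:ℚ) ≠ 0 := Nat.cast_ne_zero.mpr ha0
          have hFQ : (F:ℚ) ≠ 0 := Nat.cast_ne_zero.mpr hF0
          have hsa : (a:ℚ)^n = (a:ℚ)^(n-j) * (a:ℚ)^j := by
            rw [← pow_add, Nat.sub_add_cancel hj']
          have hsF : (F:ℚ)^n = (F:ℚ)^(n-j) * (F:ℚ)^j := by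
            rw [← pow_add, Nat.sub_add_cancel hj']
          rw [div_pow, div_pow, hsa, hsF]
          field_simp
        have hKQ : ((a:K))^n * (((∑ j ∈ Finset.range (n + 1),
              ((n.choose j : ℚ) * ((F : ℚ) / (a : ℚ)) ^ j * eulerNumber j)) : ℚ) : K)
            = ((F:K))^n * ((eulerPoly n ((a:ℚ)/(F:ℚ)) : ℚ) : K) := by
          have hc := congrArg (fun q : ℚ => (q : K)) hQ
          push_cast at hc ⊢
          exact hc
        rw [hχa, hdiv, hsum]
        have hWn : W^n ≠ 0 := pow_ne_zero _ hWne
        calc ψ ((a:ℕ) : ZMod f') * W^n * (-1:K)^a * ((a:K)^n / W^n) *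
              (((∑ j ∈ Finset.range (n + 1),
                ((n.choose j : ℚ) * ((F : ℚ) / (a : ℚ)) ^ j * eulerNumber j)) : ℚ) : K)
            = ψ ((a:ℕ) : ZMod f') * (-1:K)^a *
              ((a:K)^n * (((∑ j ∈ Finset.range (n + 1),
                ((n.choose j : ℚ) * ((F : ℚ) / (a : ℚ)) ^ j * eulerNumber j)) : ℚ) : K)) * (W^n / W^n) := by
              ring
          _ = ψ ((a:ℕ) : ZMod f') * (-1:K)^a *
              ((F:K)^n * ((eulerPoly n ((a:ℚ)/(F:ℚ)) : ℚ) : K)) * 1 := by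
              rw [div_self hWn, hKQ]
          _ = (F:K)^n * (ψ ((a:ℕ) : ZMod f') * (-1:K)^a * ((eulerPoly n ((a:ℚ)/(F:ℚ)) : ℚ) : K)) := by
              ring
      · have hz1 : χ ((a:ℕ) : ZMod F) = 0 := by
          apply χ.map_nonunit
          rw [ZMod.isUnit_iff_coprime]
          exact haF
        have hz2 : ψ ((a:ℕ) : ZMod f') = 0 := by
          apply ψ.map_nonunit
          rw [ZMod.isUnit_iff_coprime]
          intro hcf
          exact haF (Nat.Coprime.coprime_dvd_right hcond (Nat.Coprime.mul_right hcf hap))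
        rw [hz1, hz2]
        ring
    · rw [if_neg hap, if_neg hap]
  rw [Finset.sum_congr rfl hterm]
  have hsplit : ∀ a ∈ Finset.range F,
      (if a.Coprime p then
          (F:K)^n * (ψ (a : ZMod f') * (-1:K)^a * ((eulerPoly n ((a:ℚ)/(F:ℚ)) : ℚ) : K))
        else 0)
      = (F:K)^n * (ψ (a : ZMod f') * (-1:K)^a * ((eulerPoly n ((a:ℚ)/(F:ℚ)) : ℚ) : K))
        - (F:K)^n * (if p ∣ a then ψ (a : ZMod f') * (-1:K)^a * ((eulerPoly n ((a:ℚ)/(F:ℚ)) : ℚ) : K) else 0) := by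
    intro a _
    by_cases hdvd : p ∣ a
    · rw [if_neg (fun hc => (hp'.coprime_iff_not_dvd.mp (Nat.coprime_comm.mp hc)) hdvd), if_pos hdvd]
      ring
    · rw [if_pos (Nat.coprime_comm.mp (hp'.coprime_iff_not_dvd.mpr hdvd)), if_neg hdvd]
      ring
  rw [Finset.sum_congr rfl hsplit, Finset.sum_sub_distrib, ← Finset.mul_sum, ← Finset.mul_sum]
  have hPm : ∑ a ∈ Finset.range F, (if p ∣ a then ψ (a : ZMod f') * (-1:K)^a * ((eulerPoly n ((a:ℚ)/(F:ℚ)) : ℚ) : K) else 0)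
      = ψ ((p : ℕ) : ZMod f') * ∑ c ∈ Finset.range m,
          ψ (c : ZMod f') * (-1:K)^c * ((eulerPoly n ((c:ℚ)/(m:ℚ)) : ℚ) : K) := by
    have hps := psub (K := K) ψ n p m hp hp0
    rw [← hm] at hps
    exact hps
  rw [hPm]
  have hC := dist_rel ψ n F hf'F hFodd
  by_cases hpf : p ∣ f'
  · have hψp : ψ ((p:ℕ) : ZMod f') = 0 := by
      apply ψ.map_nonunit
      rw [ZMod.isUnit_iff_coprime]
      intro hc
      have hd1 : p ∣ Nat.gcd p f' := Nat.dvd_gcd dvd_rfl hpf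
      rw [hc] at hd1
      exact hp'.ne_one (Nat.dvd_one.mp hd1)
    rw [hψp]
    linear_combination hC
  · have hcop : Nat.Coprime f' p := Nat.coprime_comm.mp (hp'.coprime_iff_not_dvd.mpr hpf)
    have hf'm : f' ∣ m := hcop.dvd_of_dvd_mul_right (by rw [Nat.mul_comm m p, ← hm]; exact hf'F)
    have hD := dist_rel ψ n m hf'm hmodd
    have hFpow : (F:K)^n = (p:K)^n * (m:K)^n := by
      rw [hm]
      push_cast
      ring
    linear_combination hC - ψ ((p:ℕ) : ZMod f') * (p:K)^n * hD
      - ψ ((p:ℕ) : ZMod f') * (∑ c ∈ Finset.range m,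
          ψ (c : ZMod f') * (-1:K)^c * ((eulerPoly n ((c:ℚ)/(m:ℚ)) : ℚ) : K)) * hFpow
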